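/- Let k, n ≥ 1 and let x_1, …, x_n be real numbers in [0,1] satisfying, for every 1 ≤ t ≤ n, the inequality 1 − x_t ≤ (1/(kn)) · Σ_{s=1}^{t} x_s. Then Σ_{s=1}^{n} x_s ≥ Σ_{s=1}^{n} (kn/(kn+1))^s = kn (1 − (1 − 1/(kn+1))^n). -/

import Mathlib

/-- If `x 1, …, x n ∈ [0,1]` satisfy `1 - x t ≤ (1/(kn)) ∑_{s=1}^t x s`
for all `1 ≤ t ≤ n`, then `∑_{s=1}^n x s ≥ ∑_{s=1}^n (kn/(kn+1))^s = kn (1 - (1 - 1/(kn+1))^n)`. -/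
theorem stmt7 (k n : ℕ) (hk : 1 ≤ k) (hn : 1 ≤ n) (x : ℕ → ℝ)
    (hx01 : ∀ t ∈ Finset.Icc 1 n, 0 ≤ x t ∧ x t ≤ 1)
    (hrec : ∀ t ∈ Finset.Icc 1 n,
      1 - x t ≤ (1 / ((k : ℝ) * n)) * ∑ s ∈ Finset.Icc 1 t, x s) :
    (∑ s ∈ Finset.Icc 1 n, x s ≥
        ∑ s ∈ Finset.Icc 1 n, (((k : ℝ) * n) / ((k : ℝ) * n + 1)) ^ s) ∧
    (∑ s ∈ Finset.Icc 1 n, (((k : ℝ) * n) / ((k : ℝ) * n + 1)) ^ s =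
        (k : ℝ) * n * (1 - (1 - 1 / ((k : ℝ) * n + 1)) ^ n)) := by
  set K : ℝ := (k : ℝ) * n with hKdef
  have hK : 0 < K := by
    have h1 : (1:ℝ) ≤ (k:ℝ) := by exact_mod_cast hk
    have h2 : (1:ℝ) ≤ (n:ℝ) := by exact_mod_cast hn
    rw [hKdef]; nlinarith
  have hK1 : 0 < K + 1 := by linarith
  set r : ℝ := K / (K + 1) with hrdef
  have hr : 0 < r := div_pos hK hK1
  have hrK : r * (K + 1) = K := by
    rw [hrdef]; field_simp
  -- geometric sum identity
  have geom : ∀ m : ℕ, ∑ s ∈ Finset.Icc 1 m, r ^ s = K * (1 - r ^ m) := by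
    intro m
    induction m with
    | zero => simp
    | succ p ih =>
      rw [Finset.sum_Icc_succ_top (by omega : 1 ≤ p + 1), ih]
      linear_combination (r ^ p) * hrK
  -- main induction
  have main : ∀ t, t ≤ n → ∑ s ∈ Finset.Icc 1 t, x s ≥ ∑ s ∈ Finset.Icc 1 t, r ^ s := by
    intro t
    induction t with
    | zero => intro _; simp
    | succ m ih =>
      intro hm
      have hm' : m ≤ n := Nat.le_of_succ_le hm
      have IH := ih hm'
      have hmem : m + 1 ∈ Finset.Icc 1 n := by
        simp [Nat.succ_le_iff]; omega
      have hrec' := hrec _ hmem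
      rw [Finset.sum_Icc_succ_top (by omega : 1 ≤ m + 1)] at hrec' ⊢
      rw [Finset.sum_Icc_succ_top (by omega : 1 ≤ m + 1)]
      set S := ∑ s ∈ Finset.Icc 1 m, x s with hS
      set T := ∑ s ∈ Finset.Icc 1 m, r ^ s with hT
      have h1 : K * (1 - x (m+1)) ≤ S + x (m+1) := by
        have := mul_le_mul_of_nonneg_left hrec' (le_of_lt hK)
        calc K * (1 - x (m+1)) ≤ K * (1 / K * (S + x (m+1))) := this
          _ = S + x (m+1) := by field_simp
      have h2 : S + x (m+1) ≥ r * (1 + S) := by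
        rw [hrdef, div_mul_eq_mul_div, ge_iff_le, div_le_iff₀ hK1]
        nlinarith [h1]
      have h3 : r * (1 + S) ≥ r * (1 + T) := by
        apply mul_le_mul_of_nonneg_left _ (le_of_lt hr)
        linarith [IH]
      have h4 : r * (1 + T) = T + r ^ (m+1) := by
        rw [hT, geom m]
        linear_combination (1 - r ^ m) * hrK
      linarith [h2, h3, h4.ge, h4.le]
  refine ⟨main n le_rfl, ?_⟩
  rw [geom n]
  have hre : 1 - 1 / (K + 1) = r := by
    rw [hrdef]; field_simp; ring
  rw [hre]
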